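/- Let f : ℝ^M → ℝ^M be continuously differentiable with Jacobian Df, let T > 0, and let x : [0,T] × ℝ^M → ℝ^M satisfy ∂_t x(t,θ) = f(x(t,θ)) and x(0,θ) = θ for all θ. Fix θ ∈ ℝ^M and suppose that for each t ∈ [0,T] the map θ' ↦ x(t,θ') is differentiable at θ with derivative matrix δ(t) = D_θ x(t,θ) satisfying the variational equation δ'(t) = Df(x(t,θ)) δ(t) with δ(0) = I. Let J : ℝ^M → ℝ be differentiable and set R(θ') = J(x(T,θ')). If λ : [0,T] → ℝ^M is differentiable and satisfies the adjoint equation λ'(t) = −(Df(x(t,θ)))^⊤ λ(t) with final condition λ(T) = ∇J(x(T,θ)), then λ(0) = ∇R(θ). -/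

import Mathlib

open InnerProductSpace

theorem stmt_12 (M : ℕ) (T : ℝ) (hT : 0 < T)
    (f : EuclideanSpace ℝ (Fin M) → EuclideanSpace ℝ (Fin M))
    (hf : ContDiff ℝ 1 f)
    (x : ℝ → EuclideanSpace ℝ (Fin M) → EuclideanSpace ℝ (Fin M))
    (hx0 : ∀ θ', x 0 θ' = θ')
    (hxode : ∀ θ', ∀ t ∈ Set.Icc (0 : ℝ) T, HasDerivAt (fun τ => x τ θ') (f (x t θ')) t)
    (J : EuclideanSpace ℝ (Fin M) → ℝ) (hJ : Differentiable ℝ J)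
    (θ : EuclideanSpace ℝ (Fin M))
    (δ : ℝ → (EuclideanSpace ℝ (Fin M) →L[ℝ] EuclideanSpace ℝ (Fin M)))
    (hδ : ∀ t ∈ Set.Icc (0 : ℝ) T, HasFDerivAt (fun θ' => x t θ') (δ t) θ)
    (hδode : ∀ t ∈ Set.Icc (0 : ℝ) T,
      HasDerivAt δ ((fderiv ℝ f (x t θ)).comp (δ t)) t)
    (hδ0 : δ 0 = ContinuousLinearMap.id ℝ (EuclideanSpace ℝ (Fin M)))
    (lam : ℝ → EuclideanSpace ℝ (Fin M))
    (hlamode : ∀ t ∈ Set.Icc (0 : ℝ) T,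
      HasDerivAt lam (-(ContinuousLinearMap.adjoint (fderiv ℝ f (x t θ))) (lam t)) t)
    (hlamT : lam T = gradient J (x T θ)) :
    lam 0 = gradient (fun θ' => J (x T θ')) θ := by
  have hT0 : (0:ℝ) ∈ Set.Icc (0:ℝ) T := ⟨le_refl 0, hT.le⟩
  have hTT : T ∈ Set.Icc (0:ℝ) T := ⟨hT.le, le_refl T⟩
  -- chain rule: derivative of R at θ
  have hR : HasFDerivAt (fun θ' => J (x T θ'))
      ((fderiv ℝ J (x T θ)).comp (δ T)) θ :=
    ((hJ (x T θ)).hasFDerivAt).comp θ (hδ T hTT)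
  apply ext_inner_right ℝ
  intro v
  -- the function g t = ⟪lam t, δ t v⟫ has zero derivative on [0,T]
  set g : ℝ → ℝ := fun t => inner ℝ (lam t) ((δ t) v) with hg
  have hg' : ∀ t ∈ Set.Icc (0:ℝ) T, HasDerivAt g 0 t := by
    intro t ht
    have hδv : HasDerivAt (fun t => (δ t) v)
        (((fderiv ℝ f (x t θ)).comp (δ t)) v) t := by
      simpa using (hδode t ht).clm_apply (hasDerivAt_const t v)
    have := (hlamode t ht).inner ℝ hδv
    refine this.congr_deriv ?_
    simp only [ContinuousLinearMap.comp_apply, ContinuousLinearMap.neg_apply, inner_neg_left]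
    rw [ContinuousLinearMap.adjoint_inner_left]
    ring
  have hcont : ContinuousOn g (Set.Icc 0 T) := fun t ht =>
    (hg' t ht).continuousAt.continuousWithinAt
  have hconst : g T = g 0 := by
    have := constant_of_has_deriv_right_zero hcont
      (fun t ht => ((hg' t (Set.mem_Icc_of_Ico ht)).hasDerivWithinAt))
    exact this T hTT
  have h0 : g 0 = inner ℝ (lam 0) v := by simp [hg, hδ0]
  have hTeq : g T = inner ℝ (gradient (fun θ' => J (x T θ')) θ) v := by
    rw [hg]
    simp only [hlamT]
    rw [gradient, InnerProductSpace.toDual_symm_apply, gradient,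
      InnerProductSpace.toDual_symm_apply, hR.fderiv]
    rfl
  rw [← h0, ← hconst, hTeq]
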